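/- Conversely, if Uni(Y; B|F) = 0 and P_Y(y) > 0 for all y, then P_{F|Y} is Blackwell sufficient with respect to P_{B|Y}: there exists a stochastic matrix T(f,b) (a channel from ℱ to ℬ) such that P_{B|Y}(b|y) = Σ_f T(f,b) P_{F|Y}(f|y) for all y, b. -/
import Mathlib


open scoped BigOperators

section PID

/-- A joint probability distribution on a product of three finite types,
represented as a nonnegative function summing to one. -/
def IsDist3 {Y F B : Type*} [Fintype Y] [Fintype F] [Fintype B]
    (P : Y → F → B → ℝ) : Prop :=
  (∀ y f b, 0 ≤ P y f b) ∧ ∑ y, ∑ f, ∑ b, P y f b = 1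

/-- Marginal on (Y, F). -/
def margYF {Y F B : Type*} [Fintype B] (P : Y → F → B → ℝ) (y : Y) (f : F) : ℝ :=
  ∑ b, P y f b

/-- Marginal on (Y, B). -/
def margYB {Y F B : Type*} [Fintype F] (P : Y → F → B → ℝ) (y : Y) (b : B) : ℝ :=
  ∑ f, P y f b

/-- Marginal on (F, B). -/
def margFB {Y F B : Type*} [Fintype Y] (P : Y → F → B → ℝ) (f : F) (b : B) : ℝ :=
  ∑ y, P y f b

/-- Marginal on Y. -/
def margY {Y F B : Type*} [Fintype F] [Fintype B] (P : Y → F → B → ℝ) (y : Y) : ℝ :=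
  ∑ f, ∑ b, P y f b

/-- Marginal on F. -/
def margF {Y F B : Type*} [Fintype Y] [Fintype B] (P : Y → F → B → ℝ) (f : F) : ℝ :=
  ∑ y, ∑ b, P y f b

/-- Marginal on B. -/
def margB {Y F B : Type*} [Fintype Y] [Fintype F] (P : Y → F → B → ℝ) (b : B) : ℝ :=
  ∑ y, ∑ f, P y f b

/-- Conditional mutual information I_Q(Y ; B | F) for a joint distribution `Q`
on `Y × F × B` (natural log; `0 log 0 = 0` conventions via `Real.log 0 = 0`
and division-by-zero conventions). -/
noncomputable def condMI {Y F B : Type*} [Fintype Y] [Fintype F] [Fintype B]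
    (Q : Y → F → B → ℝ) : ℝ :=
  ∑ y, ∑ f, ∑ b, Q y f b *
    Real.log ((Q y f b * margF Q f) / (margYF Q y f * margFB Q f b))

/-- Mutual information I_P(Y ; B). -/
noncomputable def mutYB {Y F B : Type*} [Fintype Y] [Fintype F] [Fintype B]
    (P : Y → F → B → ℝ) : ℝ :=
  ∑ y, ∑ b, margYB P y b * Real.log (margYB P y b / (margY P y * margB P b))

/-- Mutual information I_P(Y ; F). -/
noncomputable def mutYF {Y F B : Type*} [Fintype Y] [Fintype F] [Fintype B]
    (P : Y → F → B → ℝ) : ℝ :=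
  ∑ y, ∑ f, margYF P y f * Real.log (margYF P y f / (margY P y * margF P f))

/-- Mutual information I_P(Y ; (F, B)). -/
noncomputable def mutYFB {Y F B : Type*} [Fintype Y] [Fintype F] [Fintype B]
    (P : Y → F → B → ℝ) : ℝ :=
  ∑ y, ∑ f, ∑ b, P y f b * Real.log (P y f b / (margY P y * margFB P f b))

/-- The feasible set Δ_P of joint distributions matching the (Y,F) and (Y,B)
marginals of `P`. -/
def Delta {Y F B : Type*} [Fintype Y] [Fintype F] [Fintype B]
    (P : Y → F → B → ℝ) : Set (Y → F → B → ℝ) :=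
  {Q | IsDist3 Q ∧ (∀ y f, margYF Q y f = margYF P y f) ∧
      (∀ y b, margYB Q y b = margYB P y b)}

/-- Unique information Uni(Y ; B | F) (Bertschinger et al.):
the infimum of I_Q(Y ; B | F) over Q ∈ Δ_P. -/
noncomputable def uni {Y F B : Type*} [Fintype Y] [Fintype F] [Fintype B]
    (P : Y → F → B → ℝ) : ℝ :=
  sInf (condMI '' Delta P)

/-- A matrix with entries in [0,1] whose rows each sum to 1. -/
def RowStochastic {F B : Type*} [Fintype B] (T : F → B → ℝ) : Prop :=
  (∀ f b, 0 ≤ T f b ∧ T f b ≤ 1) ∧ ∀ f, ∑ b, T f b = 1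

end PID

set_option linter.unusedSectionVars false

section MyAux

open Finset

lemma my_gibbs_term {p r : ℝ} (hp : 0 ≤ p) (hr : 0 ≤ r) (hpr : 0 < p → 0 < r) :
    p * Real.log (r / p) ≤ r - p := by
  rcases hp.eq_or_lt with h | h
  · simp [← h, hr]
  · have hr' := hpr h
    have hlog := Real.log_le_sub_one_of_pos (div_pos hr' h)
    have h2 : p * Real.log (r / p) ≤ p * (r / p - 1) :=
      mul_le_mul_of_nonneg_left hlog h.le
    have h3 : p * (r / p - 1) = r - p := by field_simp
    linarith

lemma my_gibbs_term_eq {p r : ℝ} (hp : 0 ≤ p) (hpr : 0 < p → 0 < r)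
    (he : p * Real.log (r / p) = r - p) : p = r := by
  rcases hp.eq_or_lt with h | h
  · have hr0 : r = 0 := by simpa [← h] using he.symm
    rw [← h, hr0]
  · have hr' := hpr h
    by_contra hne
    have h1 : r / p ≠ 1 := by
      intro hh
      exact hne ((div_eq_one_iff_eq h.ne').1 hh).symm
    have hlog := Real.log_lt_sub_one_of_pos (div_pos hr' h) h1
    have h2 : p * Real.log (r / p) < p * (r / p - 1) :=
      mul_lt_mul_of_pos_left hlog h
    have h3 : p * (r / p - 1) = r - p := by field_simp
    linarith

lemma my_neg_term {p r : ℝ} (hp : 0 ≤ p) (hpr : 0 < p → 0 < r) :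
    p * Real.log (p / r) = -(p * Real.log (r / p)) := by
  rcases hp.eq_or_lt with h | h
  · simp [← h]
  · have hr' := hpr h
    rw [← mul_neg, ← Real.log_inv, inv_div]

lemma my_gibbs_nonneg {ι : Type*} [Fintype ι] (p r : ι → ℝ) (hp : ∀ i, 0 ≤ p i)
    (hr : ∀ i, 0 ≤ r i) (hpr : ∀ i, 0 < p i → 0 < r i)
    (hsum : ∑ i, r i ≤ ∑ i, p i) :
    0 ≤ ∑ i, p i * Real.log (p i / r i) := by
  have h1 : ∑ i, p i * Real.log (p i / r i) = -∑ i, p i * Real.log (r i / p i) := by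
    rw [← Finset.sum_neg_distrib]
    exact Finset.sum_congr rfl fun i _ => my_neg_term (hp i) (hpr i)
  have h2 : ∑ i, p i * Real.log (r i / p i) ≤ ∑ i, (r i - p i) :=
    Finset.sum_le_sum fun i _ => my_gibbs_term (hp i) (hr i) (hpr i)
  rw [Finset.sum_sub_distrib] at h2
  rw [h1]
  linarith

lemma my_gibbs_eq {ι : Type*} [Fintype ι] (p r : ι → ℝ) (hp : ∀ i, 0 ≤ p i)
    (hr : ∀ i, 0 ≤ r i) (hpr : ∀ i, 0 < p i → 0 < r i)
    (hsum : ∑ i, r i = ∑ i, p i)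
    (hz : ∑ i, p i * Real.log (p i / r i) = 0) : ∀ i, p i = r i := by
  have h1 : ∑ i, p i * Real.log (p i / r i) = -∑ i, p i * Real.log (r i / p i) := by
    rw [← Finset.sum_neg_distrib]
    exact Finset.sum_congr rfl fun i _ => my_neg_term (hp i) (hpr i)
  have h2 : ∑ i, p i * Real.log (r i / p i) = ∑ i, (r i - p i) := by
    rw [Finset.sum_sub_distrib, hsum, sub_self]
    rw [h1] at hz
    linarith
  intro i
  have hterm := (Finset.sum_eq_sum_iff_of_le
    (fun i _ => my_gibbs_term (hp i) (hr i) (hpr i))).1 h2 i (mem_univ i)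
  exact my_gibbs_term_eq (hp i) (hpr i) hterm

lemma my_contOn_mul_log {α : Type*} [TopologicalSpace α] {u v : α → ℝ}
    (hu : Continuous u) (hv : Continuous v) {S : Set α}
    (h : ∀ a ∈ S, 0 ≤ u a ∧ u a ≤ v a) :
    ContinuousOn (fun a => u a * Real.log (v a)) S := by
  intro a ha
  rcases eq_or_ne (v a) 0 with hv0 | hv0
  · have hu0 : u a = 0 :=
      le_antisymm (hv0 ▸ (h a ha).2) (h a ha).1
    have htd : Filter.Tendsto (fun x => u x * Real.log (v x)) (nhdsWithin a S) (nhds 0) := by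
      apply squeeze_zero_norm' (a := fun x => |v x * Real.log (v x)|)
      · filter_upwards [eventually_mem_nhdsWithin] with x hx
        have h1 := (h x hx).1
        have h2 := (h x hx).2
        rw [Real.norm_eq_abs, abs_mul, abs_mul]
        apply mul_le_mul_of_nonneg_right _ (abs_nonneg _)
        rw [abs_of_nonneg h1, abs_of_nonneg (h1.trans h2)]
        exact h2
      · have hc : Filter.Tendsto (fun x => |v x * Real.log (v x)|) (nhds a)
            (nhds (|v a * Real.log (v a)|)) :=
          ((Real.continuous_mul_log.comp hv).abs).tendsto a
        rw [hv0] at hc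
        simpa using hc.mono_left nhdsWithin_le_nhds
    have : (fun x => u x * Real.log (v x)) a = 0 := by simp [hu0]
    unfold ContinuousWithinAt
    rw [this]
    exact htd
  · exact (hu.continuousAt.mul
      ((Real.continuousAt_log hv0).comp hv.continuousAt)).continuousWithinAt

end MyAux

section MyAux2

open Finset

variable {Y F B : Type*} [Fintype Y] [Fintype F] [Fintype B]

lemma my_margYF_nonneg (Q : Y → F → B → ℝ) (h : ∀ y f b, 0 ≤ Q y f b) (y : Y) (f : F) :
    0 ≤ margYF Q y f :=
  Finset.sum_nonneg fun b _ => h y f b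

lemma my_margFB_nonneg (Q : Y → F → B → ℝ) (h : ∀ y f b, 0 ≤ Q y f b) (f : F) (b : B) :
    0 ≤ margFB Q f b :=
  Finset.sum_nonneg fun y _ => h y f b

lemma my_margF_nonneg (Q : Y → F → B → ℝ) (h : ∀ y f b, 0 ≤ Q y f b) (f : F) :
    0 ≤ margF Q f :=
  Finset.sum_nonneg fun y _ => Finset.sum_nonneg fun b _ => h y f b

lemma my_apply_le_margYF (Q : Y → F → B → ℝ) (h : ∀ y f b, 0 ≤ Q y f b) (y : Y) (f : F) (b : B) :
    Q y f b ≤ margYF Q y f :=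
  Finset.single_le_sum (fun b _ => h y f b) (Finset.mem_univ b)

lemma my_apply_le_margFB (Q : Y → F → B → ℝ) (h : ∀ y f b, 0 ≤ Q y f b) (y : Y) (f : F) (b : B) :
    Q y f b ≤ margFB Q f b :=
  Finset.single_le_sum (fun y _ => h y f b) (Finset.mem_univ y)

lemma my_margYF_le_margF (Q : Y → F → B → ℝ) (h : ∀ y f b, 0 ≤ Q y f b) (y : Y) (f : F) :
    margYF Q y f ≤ margF Q f := by
  unfold margYF margF
  exact Finset.single_le_sum
    (f := fun y => ∑ b, Q y f b)
    (fun y _ => Finset.sum_nonneg fun b _ => h y f b) (Finset.mem_univ y)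

lemma my_apply_le_margF (Q : Y → F → B → ℝ) (h : ∀ y f b, 0 ≤ Q y f b) (y : Y) (f : F) (b : B) :
    Q y f b ≤ margF Q f :=
  (my_apply_le_margYF Q h y f b).trans (my_margYF_le_margF Q h y f)

lemma my_margF_eq_sum_margYF (Q : Y → F → B → ℝ) (f : F) :
    margF Q f = ∑ y, margYF Q y f := rfl

lemma my_margF_eq_sum_margFB (Q : Y → F → B → ℝ) (f : F) :
    margF Q f = ∑ b, margFB Q f b :=
  Finset.sum_comm

lemma my_margFB_le_margF (Q : Y → F → B → ℝ) (h : ∀ y f b, 0 ≤ Q y f b) (f : F) (b : B) :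
    margFB Q f b ≤ margF Q f := by
  rw [my_margF_eq_sum_margFB]
  exact Finset.single_le_sum
    (f := fun b => margFB Q f b)
    (fun b _ => my_margFB_nonneg Q h f b) (Finset.mem_univ b)

end MyAux2

/-- if Uni(Y;B|F) = 0 and P_Y > 0, then P_{F|Y} is Blackwell
sufficient for P_{B|Y}. -/
theorem stmt9 {Y F B : Type*} [Fintype Y] [Fintype F] [Fintype B]
    (P : Y → F → B → ℝ) (hP : IsDist3 P) (hpos : ∀ y, 0 < margY P y)
    (huni : uni P = 0) :
    ∃ T : F → B → ℝ, RowStochastic T ∧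
      ∀ y b, margYB P y b / margY P y =
        ∑ f, T f b * (margYF P y f / margY P y) := by
  classical
  obtain ⟨hPnn, hPsum⟩ := hP
  -- B is nonempty
  have hBne : Nonempty B := by
    by_contra hB
    rw [not_nonempty_iff] at hB
    simp at hPsum
  have hPmem : P ∈ Delta P := ⟨⟨hPnn, hPsum⟩, fun _ _ => rfl, fun _ _ => rfl⟩
  -- evaluation maps are continuous
  have happ : ∀ (y : Y) (f : F) (b : B), Continuous (fun Q : Y → F → B → ℝ => Q y f b) :=
    fun y f b => (continuous_apply b).comp ((continuous_apply f).comp (continuous_apply y))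
  have hcYF : ∀ (y : Y) (f : F), Continuous (fun Q : Y → F → B → ℝ => margYF Q y f) := by
    intro y f
    unfold margYF
    exact continuous_finset_sum _ fun b _ => happ y f b
  have hcYB : ∀ (y : Y) (b : B), Continuous (fun Q : Y → F → B → ℝ => margYB Q y b) := by
    intro y b
    unfold margYB
    exact continuous_finset_sum _ fun f _ => happ y f b
  have hcFB : ∀ (f : F) (b : B), Continuous (fun Q : Y → F → B → ℝ => margFB Q f b) := by
    intro f b
    unfold margFB
    exact continuous_finset_sum _ fun y _ => happ y f b
  have hcF : ∀ (f : F), Continuous (fun Q : Y → F → B → ℝ => margF Q f) := by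
    intro f
    unfold margF
    exact continuous_finset_sum _ fun y _ => continuous_finset_sum _ fun b _ => happ y f b
  -- Delta P is closed
  have hclosed : IsClosed (Delta P) := by
    have hrep : Delta P =
        (⋂ (y : Y), ⋂ (f : F), ⋂ (b : B), {Q : Y → F → B → ℝ | 0 ≤ Q y f b}) ∩
        ({Q : Y → F → B → ℝ | ∑ y, ∑ f, ∑ b, Q y f b = 1} ∩
        ((⋂ (y : Y), ⋂ (f : F), {Q : Y → F → B → ℝ | margYF Q y f = margYF P y f}) ∩
         (⋂ (y : Y), ⋂ (b : B), {Q : Y → F → B → ℝ | margYB Q y b = margYB P y b}))) := by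
      ext Q
      simp only [Delta, IsDist3, Set.mem_inter_iff, Set.mem_iInter, Set.mem_setOf_eq]
      tauto
    rw [hrep]
    refine IsClosed.inter ?_ (IsClosed.inter ?_ (IsClosed.inter ?_ ?_))
    · exact isClosed_iInter fun y => isClosed_iInter fun f => isClosed_iInter fun b =>
        isClosed_le continuous_const (happ y f b)
    · exact isClosed_eq (continuous_finset_sum _ fun y _ => continuous_finset_sum _
        fun f _ => continuous_finset_sum _ fun b _ => happ y f b) continuous_const
    · exact isClosed_iInter fun y => isClosed_iInter fun f =>
        isClosed_eq (hcYF y f) continuous_const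
    · exact isClosed_iInter fun y => isClosed_iInter fun b =>
        isClosed_eq (hcYB y b) continuous_const
  -- Delta P is compact
  have hDcomp : IsCompact (Delta P) := by
    have hK : IsCompact (Set.univ.pi fun _ : Y => Set.univ.pi fun _ : F =>
        Set.univ.pi fun _ : B => Set.Icc (0 : ℝ) 1) :=
      isCompact_univ_pi fun _ => isCompact_univ_pi fun _ => isCompact_univ_pi fun _ =>
        isCompact_Icc
    refine hK.of_isClosed_subset hclosed ?_
    rintro Q ⟨⟨hQ0, hQ1⟩, -, -⟩
    intro y _
    intro f _
    intro b _
    refine ⟨hQ0 y f b, ?_⟩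
    calc Q y f b ≤ margF Q f := my_apply_le_margF Q hQ0 y f b
      _ ≤ ∑ f, margF Q f := Finset.single_le_sum
            (fun f _ => my_margF_nonneg Q hQ0 f) (Finset.mem_univ f)
      _ = 1 := by rw [← hQ1]; exact Finset.sum_comm
  -- condMI is continuous on Delta P
  have hcont : ContinuousOn condMI (Delta P) := by
    have hbig : ContinuousOn (fun Q : Y → F → B → ℝ => ∑ y, ∑ f, ∑ b,
        (Q y f b * Real.log (Q y f b) + Q y f b * Real.log (margF Q f)
          - Q y f b * Real.log (margYF Q y f)
          - Q y f b * Real.log (margFB Q f b))) (Delta P) := by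
      refine continuousOn_finset_sum _ fun y _ => continuousOn_finset_sum _ fun f _ =>
        continuousOn_finset_sum _ fun b _ => ?_
      refine ContinuousOn.sub (ContinuousOn.sub (ContinuousOn.add ?_ ?_) ?_) ?_
      · exact (Real.continuous_mul_log.comp (happ y f b)).continuousOn
      · exact my_contOn_mul_log (happ y f b) (hcF f)
          (fun Q hQ => ⟨hQ.1.1 y f b, my_apply_le_margF Q hQ.1.1 y f b⟩)
      · exact my_contOn_mul_log (happ y f b) (hcYF y f)
          (fun Q hQ => ⟨hQ.1.1 y f b, my_apply_le_margYF Q hQ.1.1 y f b⟩)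
      · exact my_contOn_mul_log (happ y f b) (hcFB f b)
          (fun Q hQ => ⟨hQ.1.1 y f b, my_apply_le_margFB Q hQ.1.1 y f b⟩)
    refine hbig.congr ?_
    intro Q hQ
    have hQ0 := hQ.1.1
    unfold condMI
    refine Finset.sum_congr rfl fun y _ => Finset.sum_congr rfl fun f _ =>
      Finset.sum_congr rfl fun b _ => ?_
    rcases (hQ0 y f b).eq_or_lt with h | h
    · simp [← h]
    · have hyf : 0 < margYF Q y f := h.trans_le (my_apply_le_margYF Q hQ0 y f b)
      have hfb : 0 < margFB Q f b := h.trans_le (my_apply_le_margFB Q hQ0 y f b)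
      have hf : 0 < margF Q f := h.trans_le (my_apply_le_margF Q hQ0 y f b)
      rw [Real.log_div (mul_ne_zero h.ne' hf.ne') (mul_ne_zero hyf.ne' hfb.ne'),
        Real.log_mul h.ne' hf.ne', Real.log_mul hyf.ne' hfb.ne']
      ring
  -- the infimum is attained at some Q with condMI Q = 0
  obtain ⟨Q, hQmem, hQzero⟩ : ∃ Q ∈ Delta P, condMI Q = 0 := by
    have hne : (condMI '' Delta P).Nonempty := ⟨_, P, hPmem, rfl⟩
    have hc : IsCompact (condMI '' Delta P) := hDcomp.image_of_continuousOn hcont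
    have hmem := hc.sInf_mem hne
    unfold uni at huni
    rw [huni] at hmem
    obtain ⟨Q, hQ, hQ2⟩ := hmem
    exact ⟨Q, hQ, hQ2⟩
  obtain ⟨⟨hQnn, hQsum⟩, hYF, hYB⟩ := hQmem
  -- rewrite each term of condMI in KL form
  have hterm_eq : ∀ (y : Y) (f : F) (b : B),
      Q y f b * Real.log ((Q y f b * margF Q f) / (margYF Q y f * margFB Q f b)) =
      Q y f b * Real.log (Q y f b / (margYF Q y f * margFB Q f b / margF Q f)) := by
    intro y f b
    rcases (hQnn y f b).eq_or_lt with h | h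
    · simp [← h]
    · congr 1
      rw [div_div_eq_mul_div]
  -- sum of the reference measure over (y, b) equals margF
  have hrsum : ∀ f : F,
      (∑ y, ∑ b, margYF Q y f * margFB Q f b / margF Q f) = margF Q f := by
    intro f
    rcases eq_or_ne (margF Q f) 0 with h | h
    · simp [h]
    · have h1 : (∑ y, ∑ b, margYF Q y f * margFB Q f b / margF Q f) =
          (∑ y, margYF Q y f) * (∑ b, margFB Q f b) / margF Q f := by
        rw [Finset.sum_mul_sum]
        rw [Finset.sum_div]
        refine Finset.sum_congr rfl fun y _ => ?_
        rw [Finset.sum_div]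
      rw [h1, ← my_margF_eq_sum_margYF, ← my_margF_eq_sum_margFB,
        mul_div_assoc, div_self h, mul_one]
  -- each per-f block of condMI vanishes
  have hS : ∀ f : F,
      (∑ y, ∑ b, Q y f b * Real.log
        (Q y f b / (margYF Q y f * margFB Q f b / margF Q f))) = 0 := by
    have hpr : ∀ (f : F) (x : Y × B), 0 < Q x.1 f x.2 →
        0 < margYF Q x.1 f * margFB Q f x.2 / margF Q f := by
      intro f x hx
      have h1 : 0 < margYF Q x.1 f := hx.trans_le (my_apply_le_margYF Q hQnn x.1 f x.2)
      have h2 : 0 < margFB Q f x.2 := hx.trans_le (my_apply_le_margFB Q hQnn x.1 f x.2)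
      have h3 : 0 < margF Q f := hx.trans_le (my_apply_le_margF Q hQnn x.1 f x.2)
      exact div_pos (mul_pos h1 h2) h3
    have hsum_pr : ∀ f : F,
        (∑ x : Y × B, margYF Q x.1 f * margFB Q f x.2 / margF Q f) =
        ∑ x : Y × B, Q x.1 f x.2 := by
      intro f
      rw [Fintype.sum_prod_type, Fintype.sum_prod_type, hrsum f]
      rfl
    have hnn : ∀ f ∈ Finset.univ, (0 : ℝ) ≤
        ∑ y, ∑ b, Q y f b * Real.log
          (Q y f b / (margYF Q y f * margFB Q f b / margF Q f)) := by
      intro f _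
      have hg := my_gibbs_nonneg (fun x : Y × B => Q x.1 f x.2)
        (fun x : Y × B => margYF Q x.1 f * margFB Q f x.2 / margF Q f)
        (fun x => hQnn x.1 f x.2)
        (fun x => div_nonneg (mul_nonneg (my_margYF_nonneg Q hQnn x.1 f)
          (my_margFB_nonneg Q hQnn f x.2)) (my_margF_nonneg Q hQnn f))
        (hpr f) (le_of_eq (hsum_pr f))
      rw [Fintype.sum_prod_type] at hg
      exact hg
    have htotal : (∑ f, ∑ y, ∑ b, Q y f b * Real.log
        (Q y f b / (margYF Q y f * margFB Q f b / margF Q f))) = 0 := by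
      rw [Finset.sum_comm]
      rw [← hQzero]
      unfold condMI
      exact Finset.sum_congr rfl fun y _ => Finset.sum_congr rfl fun f _ =>
        Finset.sum_congr rfl fun b _ => (hterm_eq y f b).symm
    intro f
    exact (Finset.sum_eq_zero_iff_of_nonneg hnn).1 htotal f (Finset.mem_univ f)
  -- the factorization
  have hfact : ∀ (y : Y) (f : F) (b : B),
      Q y f b = margYF Q y f * margFB Q f b / margF Q f := by
    intro y f b
    have hpr : ∀ x : Y × B, 0 < Q x.1 f x.2 →
        0 < margYF Q x.1 f * margFB Q f x.2 / margF Q f := by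
      intro x hx
      have h1 : 0 < margYF Q x.1 f := hx.trans_le (my_apply_le_margYF Q hQnn x.1 f x.2)
      have h2 : 0 < margFB Q f x.2 := hx.trans_le (my_apply_le_margFB Q hQnn x.1 f x.2)
      have h3 : 0 < margF Q f := hx.trans_le (my_apply_le_margF Q hQnn x.1 f x.2)
      exact div_pos (mul_pos h1 h2) h3
    have hsum_pr : (∑ x : Y × B, margYF Q x.1 f * margFB Q f x.2 / margF Q f) =
        ∑ x : Y × B, Q x.1 f x.2 := by
      rw [Fintype.sum_prod_type, Fintype.sum_prod_type, hrsum f]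
      rfl
    have hz : (∑ x : Y × B, Q x.1 f x.2 * Real.log
        (Q x.1 f x.2 / (margYF Q x.1 f * margFB Q f x.2 / margF Q f))) = 0 := by
      rw [Fintype.sum_prod_type]
      exact hS f
    exact my_gibbs_eq (fun x : Y × B => Q x.1 f x.2)
      (fun x : Y × B => margYF Q x.1 f * margFB Q f x.2 / margF Q f)
      (fun x => hQnn x.1 f x.2)
      (fun x => div_nonneg (mul_nonneg (my_margYF_nonneg Q hQnn x.1 f)
        (my_margFB_nonneg Q hQnn f x.2)) (my_margF_nonneg Q hQnn f))
      hpr hsum_pr hz (y, b)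
  -- construct the channel
  obtain ⟨b0⟩ := hBne
  refine ⟨fun f b => if margF Q f = 0 then (if b = b0 then 1 else 0)
      else margFB Q f b / margF Q f, ⟨?_, ?_⟩, ?_⟩
  · intro f b
    by_cases h : margF Q f = 0
    · simp only [if_pos h]
      split_ifs <;> norm_num
    · simp only [if_neg h]
      have hf : 0 < margF Q f := (my_margF_nonneg Q hQnn f).lt_of_ne (Ne.symm h)
      constructor
      · exact div_nonneg (my_margFB_nonneg Q hQnn f b) hf.le
      · rw [div_le_one hf]
        exact my_margFB_le_margF Q hQnn f b
  · intro f
    by_cases h : margF Q f = 0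
    · simp [h]
    · simp only [if_neg h]
      rw [← Finset.sum_div, ← my_margF_eq_sum_margFB, div_self h]
  · intro y b
    have h1 : margYB P y b = ∑ f, (if margF Q f = 0 then (if b = b0 then 1 else 0)
        else margFB Q f b / margF Q f) * margYF P y f := by
      rw [← hYB y b]
      have h2 : margYB Q y b = ∑ f, Q y f b := rfl
      rw [h2]
      refine Finset.sum_congr rfl fun f _ => ?_
      rw [← hYF y f]
      by_cases h : margF Q f = 0
      · have hyf0 : margYF Q y f = 0 := by
          have hsz : (∑ y, margYF Q y f) = 0 := by
            rw [← my_margF_eq_sum_margYF, h]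
          exact (Finset.sum_eq_zero_iff_of_nonneg
            (fun y _ => my_margYF_nonneg Q hQnn y f)).1 hsz y (Finset.mem_univ y)
        have hq0 : Q y f b = 0 :=
          le_antisymm (hyf0 ▸ my_apply_le_margYF Q hQnn y f b) (hQnn y f b)
        simp [h, hyf0, hq0]
      · simp only [if_neg h]
        rw [hfact y f b]
        ring
    rw [h1, Finset.sum_div]
    exact Finset.sum_congr rfl fun f _ => (mul_div_assoc _ _ _)
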